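/- Let H be a complex Hilbert space and let Y be a contraction on H with ker(I − Y) = {0}. Then ran D_{Y*} ⊆ ran(I − Y) if and only if ran(I − Y) = ran((I − Y_R)^{1/2}). -/

import Mathlib

set_option synthInstance.maxHeartbeats 1000000

open ContinuousLinearMap

set_option maxHeartbeats 1000000

section Helpers

variable {H : Type*} [NormedAddCommGroup H] [InnerProductSpace ℂ H] [CompleteSpace H]

theorem douglas_range_le (A B : H →L[ℂ] H) (c : ℝ)
    (h : ∀ x, ‖adjoint A x‖ ≤ c * ‖adjoint B x‖) :
    LinearMap.range (A : H →ₗ[ℂ] H) ≤ LinearMap.range (B : H →ₗ[ℂ] H) := by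
  rintro z ⟨y, rfl⟩
  have key : ∀ x : H, ‖(inner ℂ (A y) x : ℂ)‖ ≤ (c * ‖y‖) * ‖adjoint B x‖ := by
    intro x
    have h1 : (inner ℂ (A y) x : ℂ) = inner ℂ y (adjoint A x) := by
      rw [adjoint_inner_right]
    calc ‖(inner ℂ (A y) x : ℂ)‖ = ‖(inner ℂ y (adjoint A x) : ℂ)‖ := by rw [h1]
      _ ≤ ‖y‖ * ‖adjoint A x‖ := norm_inner_le_norm _ _
      _ ≤ ‖y‖ * (c * ‖adjoint B x‖) := by
          refine mul_le_mul_of_nonneg_left (h x) (norm_nonneg y)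
      _ = (c * ‖y‖) * ‖adjoint B x‖ := by ring
  set Bd : H →ₗ[ℂ] H := (adjoint B).toLinearMap with hBd
  set f : H →ₗ[ℂ] ℂ := (innerSL ℂ (A y)).toLinearMap with hf
  have hker : LinearMap.ker Bd ≤ LinearMap.ker f := by
    intro x hx
    simp only [LinearMap.mem_ker] at hx ⊢
    have := key x
    rw [show adjoint B x = Bd x from rfl, hx, norm_zero, mul_zero] at this
    have : ‖f x‖ ≤ 0 := by simpa [hf] using this
    simpa using norm_le_zero_iff.mp this
  set ψ : LinearMap.range Bd →ₗ[ℂ] ℂ :=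
    (Submodule.liftQ (LinearMap.ker Bd) f hker) ∘ₗ (Bd.quotKerEquivRange.symm : LinearMap.range Bd →ₗ[ℂ] H ⧸ LinearMap.ker Bd) with hψ
  have hψ_apply : ∀ x : H, ψ ⟨Bd x, LinearMap.mem_range_self Bd x⟩ = inner ℂ (A y) x := by
    intro x
    have he : Bd.quotKerEquivRange (Submodule.Quotient.mk x) = ⟨Bd x, LinearMap.mem_range_self Bd x⟩ := by
      rfl
    simp [hψ, ← he, LinearEquiv.symm_apply_apply, hf]
  have hbound : ∀ v : LinearMap.range Bd, ‖ψ v‖ ≤ (c * ‖y‖) * ‖v‖ := by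
    rintro ⟨v, x, rfl⟩
    rw [hψ_apply x]
    exact key x
  set ψc : (LinearMap.range Bd : Submodule ℂ H) →L[ℂ] ℂ :=
    LinearMap.mkContinuous ψ (c * ‖y‖) hbound with hψc
  obtain ⟨g, hg, -⟩ := exists_extension_norm_eq (LinearMap.range Bd) ψc
  set w := (InnerProductSpace.toDual ℂ H).symm g with hw
  have hw_apply : ∀ x : H, (inner ℂ w x : ℂ) = g x := fun x =>
    InnerProductSpace.toDual_symm_apply (E := H) (𝕜 := ℂ)
  refine ⟨w, ?_⟩
  refine ext_inner_right ℂ fun x => ?_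
  have h2 : (inner ℂ (B w) x : ℂ) = inner ℂ w (adjoint B x) := (adjoint_inner_right B w x).symm
  rw [show (inner ℂ ((B : H →ₗ[ℂ] H) w) x : ℂ) = inner ℂ (B w) x from rfl, h2, hw_apply]
  exact (hg ⟨Bd x, LinearMap.mem_range_self Bd x⟩).trans (hψ_apply x)

lemma normSq_adjoint_apply (A : H →L[ℂ] H) (x : H) :
    ‖adjoint A x‖ ^ 2 = RCLike.re (inner ℂ ((A * adjoint A) x) x : ℂ) := by
  have h1 : (inner ℂ ((A * adjoint A) x) x : ℂ) = inner ℂ (adjoint A x) (adjoint A x) := by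
    rw [ContinuousLinearMap.mul_apply, ← adjoint_inner_right]
  rw [h1, ← @inner_self_eq_norm_sq ℂ]

lemma mul_adjoint_self_isPositive (C : H →L[ℂ] H) : (C * adjoint C).IsPositive := by
  have := isPositive_one.conj_adjoint (F := H) C
  exact this

lemma sqrt_selfAdjoint (T : H →L[ℂ] H) : adjoint (CFC.sqrt T) = CFC.sqrt T := by
  have h : (0:H→L[ℂ]H) ≤ CFC.sqrt T := CFC.sqrt_nonneg T
  have := ((nonneg_iff_isPositive _).mp h).isSelfAdjoint
  rwa [← star_eq_adjoint]

lemma normSq_sqrt_apply (T : H →L[ℂ] H) (hT : (0:H→L[ℂ]H) ≤ T) (x : H) :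
    ‖CFC.sqrt T x‖ ^ 2 = RCLike.re (inner ℂ (T x) x : ℂ) := by
  have h0 : adjoint (CFC.sqrt T) = CFC.sqrt T := sqrt_selfAdjoint T
  have h1 := normSq_adjoint_apply (CFC.sqrt T) x
  rw [h0, CFC.sqrt_mul_sqrt_self T hT] at h1
  exact h1

lemma douglas_of_normSq_le (A B : H →L[ℂ] H) (c : ℝ)
    (h : ∀ x, ‖adjoint A x‖ ^ 2 ≤ c ^ 2 * ‖adjoint B x‖ ^ 2) :
    LinearMap.range (A : H →ₗ[ℂ] H) ≤ LinearMap.range (B : H →ₗ[ℂ] H) := by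
  refine douglas_range_le A B |c| fun x => ?_
  have h2 : ‖adjoint A x‖ ^ 2 ≤ (|c| * ‖adjoint B x‖) ^ 2 := by
    calc ‖adjoint A x‖ ^ 2 ≤ c ^ 2 * ‖adjoint B x‖ ^ 2 := h x
      _ = (|c| * ‖adjoint B x‖) ^ 2 := by rw [mul_pow, sq_abs]
  exact le_of_sq_le_sq h2 (by positivity)

lemma defect_nonneg (Y : H →L[ℂ] H) (hY : ‖Y‖ ≤ 1) : (0:H→L[ℂ]H) ≤ 1 - Y * adjoint Y := by
  rw [nonneg_iff_isPositive, isPositive_def']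
  constructor
  · rw [IsSelfAdjoint, star_sub, star_one, star_mul,
      show star (adjoint Y) = Y from by rw [star_eq_adjoint, adjoint_adjoint], star_eq_adjoint]
  · intro x
    have h1 : (1 - Y * adjoint Y).reApplyInnerSelf x
        = RCLike.re (inner ℂ x x : ℂ) - RCLike.re (inner ℂ (adjoint Y x) (adjoint Y x) : ℂ) := by
      simp only [reApplyInnerSelf, ContinuousLinearMap.sub_apply, ContinuousLinearMap.one_apply, ContinuousLinearMap.mul_apply, inner_sub_left, map_sub]
      congr 1
      rw [← adjoint_inner_right]
    rw [h1]
    simp only [@inner_self_eq_norm_sq ℂ]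
    have h2 : ‖adjoint Y x‖ ≤ ‖x‖ := by
      calc ‖adjoint Y x‖ ≤ ‖adjoint Y‖ * ‖x‖ := le_opNorm _ x
        _ ≤ 1 * ‖x‖ := by
            have h3 : ‖adjoint Y‖ = ‖Y‖ :=
              LinearIsometryEquiv.norm_map (adjoint : (H →L[ℂ] H) ≃ₗᵢ⋆[ℂ] (H →L[ℂ] H)) Y
            rw [h3]; exact mul_le_mul_of_nonneg_right hY (norm_nonneg x)
        _ = ‖x‖ := one_mul _
    nlinarith [norm_nonneg (adjoint Y x), norm_nonneg x]

lemma realpart_nonneg (Y : H →L[ℂ] H) (hY : ‖Y‖ ≤ 1) :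
    (0:H→L[ℂ]H) ≤ 1 - (2⁻¹ : ℂ) • (Y + adjoint Y) := by
  rw [nonneg_iff_isPositive, isPositive_def']
  have hsY : star (adjoint Y) = Y := by rw [star_eq_adjoint, adjoint_adjoint]
  constructor
  · rw [IsSelfAdjoint, star_sub, star_one, star_smul, star_add, hsY, star_eq_adjoint,
      add_comm]
    congr 1
    simp
  · intro x
    set z : ℂ := inner ℂ (Y x) x with hzdef
    have hz : (inner ℂ (adjoint Y x) x : ℂ) = (starRingEnd ℂ) z := by
      rw [adjoint_inner_left, ← inner_conj_symm]
    have key : ((2⁻¹:ℂ) * (z + (starRingEnd ℂ) z)) = ((RCLike.re z : ℝ) : ℂ) := by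
      rw [RCLike.add_conj]; ring_nf; norm_cast
    have h1 : (1 - (2⁻¹:ℂ) • (Y + adjoint Y)).reApplyInnerSelf x = ‖x‖^2 - RCLike.re z := by
      simp only [reApplyInnerSelf, ContinuousLinearMap.sub_apply, ContinuousLinearMap.one_apply, ContinuousLinearMap.smul_apply, ContinuousLinearMap.add_apply,
        inner_sub_left, inner_smul_left, inner_add_left]
      rw [hz, show (starRingEnd ℂ) (2⁻¹:ℂ) = (2⁻¹:ℂ) from by simp [Complex.ext_iff], key,
        map_sub]
      simp [@inner_self_eq_norm_sq ℂ]
      norm_cast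
    rw [h1]
    have h3 : RCLike.re z ≤ ‖x‖^2 := by
      calc RCLike.re z ≤ ‖z‖ := RCLike.re_le_norm _
        _ ≤ ‖Y x‖ * ‖x‖ := norm_inner_le_norm _ _
        _ ≤ (‖Y‖ * ‖x‖) * ‖x‖ := mul_le_mul_of_nonneg_right (le_opNorm _ _) (norm_nonneg _)
        _ ≤ (1 * ‖x‖) * ‖x‖ :=
            mul_le_mul_of_nonneg_right
              (mul_le_mul_of_nonneg_right hY (norm_nonneg _)) (norm_nonneg _)
        _ = ‖x‖^2 := by ring
    linarith

lemma op_identity (Y : H →L[ℂ] H) :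
    (1 - Y) * adjoint (1 - Y) + (1 - Y * adjoint Y)
      = (2:ℂ) • (1 - (2⁻¹ : ℂ) • (Y + adjoint Y)) := by
  have hadjA : adjoint (1 - Y) = 1 - adjoint Y := by
    rw [← star_eq_adjoint, star_sub, star_one, star_eq_adjoint]
  rw [hadjA, smul_sub, smul_smul, show (2:ℂ)*2⁻¹ = 1 from by norm_num, one_smul, two_smul]
  noncomm_ring

end Helpers

/-- For a contraction `Y` on a complex Hilbert space with `ker (I - Y) = {0}`,
`ran D_{Y*} ⊆ ran (I - Y)` iff `ran (I - Y) = ran ((I - Y_R)^{1/2})`, where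
`D_{Y*} = (I - YY*)^{1/2}` and `Y_R = (Y + Y*)/2`. -/
theorem range_defect_le_iff_range_eq_sqrt_real_part
    {H : Type*} [NormedAddCommGroup H] [InnerProductSpace ℂ H] [CompleteSpace H]
    (Y : H →L[ℂ] H) (hY : ‖Y‖ ≤ 1) (hker : LinearMap.ker ((1 - Y : H →L[ℂ] H) : H →ₗ[ℂ] H) = ⊥) :
    LinearMap.range ((CFC.sqrt (1 - Y * adjoint Y) : H →L[ℂ] H) : H →ₗ[ℂ] H) ≤
      LinearMap.range ((1 - Y : H →L[ℂ] H) : H →ₗ[ℂ] H) ↔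
      LinearMap.range ((1 - Y : H →L[ℂ] H) : H →ₗ[ℂ] H) =
        LinearMap.range ((CFC.sqrt (1 - (2⁻¹ : ℂ) • (Y + adjoint Y)) : H →L[ℂ] H) : H →ₗ[ℂ] H) := by
  set D2 : H →L[ℂ] H := 1 - Y * adjoint Y with hD2def
  set M0 : H →L[ℂ] H := 1 - (2⁻¹ : ℂ) • (Y + adjoint Y) with hM0def
  set S : H →L[ℂ] H := CFC.sqrt D2 with hSdef
  set N : H →L[ℂ] H := CFC.sqrt M0 with hNdef
  have hD2 : (0:H→L[ℂ]H) ≤ D2 := defect_nonneg Y hY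
  have hM0 : (0:H→L[ℂ]H) ≤ M0 := realpart_nonneg Y hY
  have hSS : S * S = D2 := CFC.sqrt_mul_sqrt_self D2 hD2
  have hSsa : adjoint S = S := sqrt_selfAdjoint D2
  have hNsa : adjoint N = N := sqrt_selfAdjoint M0
  have hSx : ∀ x, ‖S x‖ ^ 2 = RCLike.re (inner ℂ (D2 x) x : ℂ) := normSq_sqrt_apply D2 hD2
  have hNx : ∀ x, ‖N x‖ ^ 2 = RCLike.re (inner ℂ (M0 x) x : ℂ) := normSq_sqrt_apply M0 hM0
  have hD2x : ∀ x, 0 ≤ RCLike.re (inner ℂ (D2 x) x : ℂ) := fun x =>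
    ((nonneg_iff_isPositive D2).mp hD2).re_inner_nonneg_left x
  have hM0x : ∀ x, 0 ≤ RCLike.re (inner ℂ (M0 x) x : ℂ) := fun x =>
    ((nonneg_iff_isPositive M0).mp hM0).re_inner_nonneg_left x
  -- pointwise quadratic form identity
  have hpt : ∀ x, RCLike.re (inner ℂ ((((1 - Y) * adjoint (1 - Y) : H →L[ℂ] H)) x) x : ℂ)
      + RCLike.re (inner ℂ (D2 x) x : ℂ) = 2 * RCLike.re (inner ℂ (M0 x) x : ℂ) := by
    intro x
    have h0 := congrArg (fun T : H →L[ℂ] H => RCLike.re (inner ℂ (T x) x : ℂ)) (op_identity Y)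
    simp only [add_apply, smul_apply, inner_add_left, inner_smul_left, map_add] at h0
    have hc : RCLike.re ((starRingEnd ℂ) (2:ℂ) * (inner ℂ (M0 x) x : ℂ))
        = 2 * RCLike.re (inner ℂ (M0 x) x : ℂ) := by
      rw [show (starRingEnd ℂ) (2:ℂ) = 2 from by simp [Complex.ext_iff]]
      rw [RCLike.mul_re]
      norm_num
    rw [hc] at h0
    exact h0
  have hA_le_N : LinearMap.range ((1 - Y : H →L[ℂ] H) : H →ₗ[ℂ] H) ≤ LinearMap.range (N : H →ₗ[ℂ] H) := by
    refine douglas_of_normSq_le (1 - Y) N (Real.sqrt 2) fun x => ?_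
    rw [hNsa, Real.sq_sqrt (by norm_num : (0:ℝ) ≤ 2), normSq_adjoint_apply (1 - Y) x]
    have := hpt x; have := hD2x x; have := hNx x
    linarith
  have hS_le_N : LinearMap.range (S : H →ₗ[ℂ] H) ≤ LinearMap.range (N : H →ₗ[ℂ] H) := by
    refine douglas_of_normSq_le S N (Real.sqrt 2) fun x => ?_
    rw [hNsa, hSsa, Real.sq_sqrt (by norm_num : (0:ℝ) ≤ 2)]
    have h1 := hSx x
    have h2 := hpt x
    have h3 := hNx x
    have h4 : 0 ≤ ‖adjoint (1 - Y) x‖ ^ 2 := sq_nonneg _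
    rw [normSq_adjoint_apply (1 - Y) x] at h4
    linarith
  constructor
  · -- forward
    intro hS
    -- build the Douglas factor C with (1 - Y) * C = S
    have hinjL : Function.Injective ((1 - Y : H →L[ℂ] H) : H →ₗ[ℂ] H) := by
      rw [← LinearMap.ker_eq_bot]
      exact hker
    set A' : H →ₗ[ℂ] H := ((1 - Y : H →L[ℂ] H) : H →ₗ[ℂ] H) with hA'def
    set e := LinearEquiv.ofInjective A' hinjL with hedef
    have hmem : ∀ x, S x ∈ LinearMap.range A' := by
      intro x
      have : S x ∈ LinearMap.range (S : H →ₗ[ℂ] H) := LinearMap.mem_range_self (S : H →ₗ[ℂ] H) x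
      exact hS this
    set C0 : H →ₗ[ℂ] H :=
      (e.symm : LinearMap.range A' →ₗ[ℂ] H) ∘ₗ
        LinearMap.codRestrict (LinearMap.range A') (S : H →ₗ[ℂ] H) hmem with hC0def
    have hC0 : ∀ x, (1 - Y) (C0 x) = S x := by
      intro x
      have h1 : e (C0 x) = ⟨S x, hmem x⟩ := by
        simp only [hC0def, LinearMap.coe_comp, Function.comp_apply, LinearEquiv.coe_coe]
        rw [e.apply_symm_apply]
        rfl
      have h2 : ((e (C0 x) : LinearMap.range A') : H) = (1 - Y) (C0 x) := by
        rw [hedef, LinearEquiv.ofInjective_apply]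
        rfl
      rw [h1] at h2
      exact h2.symm
    have hclosed : IsClosed (C0.graph : Set (H × H)) := by
      have hset : (C0.graph : Set (H × H)) =
          ((1 - Y).comp (ContinuousLinearMap.snd ℂ H H)
            - S.comp (ContinuousLinearMap.fst ℂ H H)) ⁻¹' {0} := by
        ext p
        simp only [SetLike.mem_coe, LinearMap.mem_graph_iff, Set.mem_preimage,
          Set.mem_singleton_iff]
        constructor
        · intro h
          show (1 - Y) p.2 - S p.1 = 0
          rw [h, hC0 p.1, sub_self]
        · intro h
          have h' : (1 - Y) p.2 - S p.1 = 0 := h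
          have h'' : (1 - Y) p.2 = S p.1 := sub_eq_zero.mp h'
          exact hinjL (show A' p.2 = A' (C0 p.1) from by
            show (1 - Y) p.2 = (1 - Y) (C0 p.1)
            rw [hC0 p.1]; exact h'')
      rw [hset]
      exact isClosed_singleton.preimage (ContinuousLinearMap.continuous _)
    set C : H →L[ℂ] H := ⟨C0, C0.continuous_of_isClosed_graph hclosed⟩ with hCdef
    have hAC : (1 - Y) * C = S := by
      ext x
      exact hC0 x
    set G : H →L[ℂ] H := CFC.sqrt (1 + C * adjoint C) with hGdef
    have hGpos : (0:H→L[ℂ]H) ≤ 1 + C * adjoint C := by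
      rw [nonneg_iff_isPositive]
      exact isPositive_one.add (mul_adjoint_self_isPositive C)
    have hGG : G * G = 1 + C * adjoint C := CFC.sqrt_mul_sqrt_self _ hGpos
    have hGsa : adjoint G = G := sqrt_selfAdjoint _
    have hadjmul : ∀ P Q : H →L[ℂ] H, adjoint (P * Q) = adjoint Q * adjoint P := by
      intro P Q
      rw [← star_eq_adjoint, star_mul, star_eq_adjoint, star_eq_adjoint]
    have hfact : ((1 - Y) * G) * adjoint ((1 - Y) * G)
        = (1 - Y) * adjoint (1 - Y) + D2 := by
      calc ((1 - Y) * G) * adjoint ((1 - Y) * G)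
          = (1 - Y) * (G * G) * adjoint (1 - Y) := by
            rw [hadjmul, hGsa]; noncomm_ring
        _ = (1 - Y) * adjoint (1 - Y)
            + ((1 - Y) * C) * (adjoint C * adjoint (1 - Y)) := by
            rw [hGG]; noncomm_ring
        _ = (1 - Y) * adjoint (1 - Y) + S * adjoint ((1 - Y) * C) := by
            rw [hadjmul, hAC]
        _ = (1 - Y) * adjoint (1 - Y) + D2 := by
            rw [hAC, hSsa, hSS]
    have hN_le_AG : LinearMap.range (N : H →ₗ[ℂ] H) ≤ LinearMap.range (((1 - Y) * G : H →L[ℂ] H) : H →ₗ[ℂ] H) := by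
      refine douglas_of_normSq_le N ((1 - Y) * G) 1 fun x => ?_
      rw [hNsa, one_pow, one_mul, normSq_adjoint_apply ((1 - Y) * G) x, hfact]
      have h5 : RCLike.re (inner ℂ ((((1 - Y) * adjoint (1 - Y) + D2 : H →L[ℂ] H)) x) x : ℂ)
          = RCLike.re (inner ℂ ((((1 - Y) * adjoint (1 - Y) : H →L[ℂ] H)) x) x : ℂ)
            + RCLike.re (inner ℂ (D2 x) x : ℂ) := by
        simp [add_apply, inner_add_left]
      rw [h5]
      have := hpt x; have := hNx x; have := hM0x x
      linarith
    have hAG_le_A : LinearMap.range (((1 - Y) * G : H →L[ℂ] H) : H →ₗ[ℂ] H) ≤ LinearMap.range ((1 - Y : H →L[ℂ] H) : H →ₗ[ℂ] H) := by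
      rintro v ⟨u, rfl⟩
      exact ⟨G u, rfl⟩
    exact le_antisymm hA_le_N (hN_le_AG.trans hAG_le_A)
  · -- backward
    intro hEq
    rw [hEq]
    exact hS_le_N
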